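/- Assume τ_pβ_p > 0, τ_{m.p}β_{m.p} > 0, ε_p, ε_{m.p} ∈ (0,1) and θ ∈ (0,1). Then the vector φ₀ = (R_p − R_{m.p} + [(R_p − R_{m.p})² + 4K_{m.p→p}K_{p→m.p}]^{1/2}, 2K_{p→m.p}) has both components positive and satisfies D_p⁻¹(G_p−L_p)·φ₀ = r·φ₀, where r = (1/(2B₀))·{R_p + R_{m.p} + [(R_p − R_{m.p})² + 4K_{m.p→p}K_{p→m.p}]^{1/2}}; moreover r is the largest eigenvalue (spectral radius) of D_p⁻¹(G_p−L_p). -/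

import Mathlib

open Filter Set Matrix

/-- The matrix `D_p⁻¹(G_p − L_p)`. -/
noncomputable def DpInvGpLp (dp dmp bp bmp tp tmp ep emp th : ℝ) : Matrix (Fin 2) (Fin 2) ℝ :=
  !![(tp * bp * (1 - ep * (1 - th)) - th * tp * bp) / dp,
       emp * (1 - th) * tmp * bmp / dp;
     ep * (1 - th) * tp * bp / dmp,
       (tmp * bmp * (1 - emp * (1 - th)) - th * tmp * bmp) / dmp]


lemma aux_eigvec (B0 Rp Rmp Kpmp Kmpp s r : ℝ) (hB0 : B0 ≠ 0)
    (hs2 : s ^ 2 = (Rp - Rmp) ^ 2 + 4 * Kmpp * Kpmp)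
    (hr : r = (1 / (2 * B0)) * (Rp + Rmp + s)) :
    (!![Rp / B0, Kmpp / B0; Kpmp / B0, Rmp / B0]).mulVec ![Rp - Rmp + s, 2 * Kpmp]
      = r • ![Rp - Rmp + s, 2 * Kpmp] := by
  funext i
  fin_cases i <;>
    simp [Matrix.mulVec, dotProduct, Fin.sum_univ_two, hr] <;> field_simp
  · linear_combination (-1) * hs2
  · ring

lemma aux_spec (B0 Rp Rmp Kpmp Kmpp r r' : ℝ)
    (h_tr : Rp / B0 + Rmp / B0 = r + r')
    (h_det : (Rp / B0) * (Rmp / B0) - (Kmpp / B0) * (Kpmp / B0) = r * r') (z : ℂ) :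
    z ∈ spectrum ℂ ((!![Rp / B0, Kmpp / B0; Kpmp / B0, Rmp / B0]).map Complex.ofReal)
      ↔ (z - (r : ℂ)) * (z - (r' : ℂ)) = 0 := by
  rw [spectrum.mem_iff, Algebra.algebraMap_eq_smul_one, Matrix.isUnit_iff_isUnit_det,
    isUnit_iff_ne_zero, not_ne_iff]
  have hdet : ((z • (1 : Matrix (Fin 2) (Fin 2) ℂ)
      - (!![Rp / B0, Kmpp / B0; Kpmp / B0, Rmp / B0]).map Complex.ofReal)).det
      = (z - (r : ℂ)) * (z - (r' : ℂ)) := by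
    rw [Matrix.det_fin_two]
    simp [Matrix.map_apply]
    have htrC : ((Rp / B0 : ℝ) : ℂ) + ((Rmp / B0 : ℝ) : ℂ) = (r : ℂ) + (r' : ℂ) := by
      exact_mod_cast congrArg Complex.ofReal h_tr
    have hdetC : ((Rp / B0 : ℝ) : ℂ) * ((Rmp / B0 : ℝ) : ℂ)
        - ((Kmpp / B0 : ℝ) : ℂ) * ((Kpmp / B0 : ℝ) : ℂ) = (r : ℂ) * (r' : ℂ) := by
      exact_mod_cast congrArg Complex.ofReal h_det
    push_cast at htrC hdetC ⊢
    linear_combination (-z) * htrC + hdetC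
  rw [hdet]

set_option maxHeartbeats 1600000 in
/-- The vector
`φ₀ = (R_p − R_{m.p} + √((R_p − R_{m.p})² + 4K_{m.p→p}K_{p→m.p}), 2K_{p→m.p})` has
positive components and is an eigenvector of `D_p⁻¹(G_p−L_p)` for the eigenvalue
`r = (1/(2B₀))·(R_p + R_{m.p} + √((R_p − R_{m.p})² + 4K_{m.p→p}K_{p→m.p}))`, which is
the largest eigenvalue (spectral radius) of this matrix. -/
theorem principal_eigenpair_plasmid_block
    (Lam d dp dmp bp bmp tp tmp ep emp th : ℝ)
    (hLam : 0 < Lam) (hd : 0 < d) (hdp : 0 < dp) (hdmp : 0 < dmp)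
    (hp : 0 < tp * bp) (hmp : 0 < tmp * bmp)
    (hep : ep ∈ Set.Ioo (0:ℝ) 1) (hemp : emp ∈ Set.Ioo (0:ℝ) 1)
    (hth : th ∈ Set.Ioo (0:ℝ) 1)
    (B0 Rp Rmp Kpmp Kmpp r : ℝ)
    (hB0 : B0 = Lam / d)
    (hRp : Rp = B0 * tp * bp / dp * (1 - ep) * (1 - th))
    (hRmp : Rmp = B0 * tmp * bmp / dmp * (1 - emp) * (1 - th))
    (hKpmp : Kpmp = B0 * ep * (1 - th) * tp * bp / dmp)
    (hKmpp : Kmpp = B0 * emp * (1 - th) * tmp * bmp / dp)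
    (hr : r = (1 / (2 * B0)) * (Rp + Rmp + Real.sqrt ((Rp - Rmp) ^ 2 + 4 * Kmpp * Kpmp))) :
    (0 < Rp - Rmp + Real.sqrt ((Rp - Rmp) ^ 2 + 4 * Kmpp * Kpmp) ∧ 0 < 2 * Kpmp) ∧
    (DpInvGpLp dp dmp bp bmp tp tmp ep emp th).mulVec
        ![Rp - Rmp + Real.sqrt ((Rp - Rmp) ^ 2 + 4 * Kmpp * Kpmp), 2 * Kpmp]
      = r • ![Rp - Rmp + Real.sqrt ((Rp - Rmp) ^ 2 + 4 * Kmpp * Kpmp), 2 * Kpmp] ∧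
    (r : ℂ) ∈ spectrum ℂ ((DpInvGpLp dp dmp bp bmp tp tmp ep emp th).map Complex.ofReal) ∧
    ∀ z ∈ spectrum ℂ ((DpInvGpLp dp dmp bp bmp tp tmp ep emp th).map Complex.ofReal),
      ‖z‖ ≤ r := by
  obtain ⟨hep0, hep1⟩ := hep
  obtain ⟨hemp0, hemp1⟩ := hemp
  obtain ⟨hth0, hth1⟩ := hth
  have hB0pos : 0 < B0 := by rw [hB0]; positivity
  have h1ep : (0:ℝ) < 1 - ep := by linarith
  have h1emp : (0:ℝ) < 1 - emp := by linarith
  have h1th : (0:ℝ) < 1 - th := by linarith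
  have hB0ne : B0 ≠ 0 := ne_of_gt hB0pos
  have hdpne : dp ≠ 0 := ne_of_gt hdp
  have hdmpne : dmp ≠ 0 := ne_of_gt hdmp
  have hRppos : 0 < Rp := by
    rw [hRp]
    have : B0 * tp * bp / dp * (1 - ep) * (1 - th)
        = (B0 / dp * (1 - ep) * (1 - th)) * (tp * bp) := by ring
    rw [this]
    have h1 : 0 < B0 / dp * (1 - ep) * (1 - th) := by positivity
    exact mul_pos h1 hp
  have hRmppos : 0 < Rmp := by
    rw [hRmp]
    have : B0 * tmp * bmp / dmp * (1 - emp) * (1 - th)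
        = (B0 / dmp * (1 - emp) * (1 - th)) * (tmp * bmp) := by ring
    rw [this]
    have h1 : 0 < B0 / dmp * (1 - emp) * (1 - th) := by positivity
    exact mul_pos h1 hmp
  have hKpmppos : 0 < Kpmp := by
    rw [hKpmp]
    have : B0 * ep * (1 - th) * tp * bp / dmp
        = (B0 * ep * (1 - th) / dmp) * (tp * bp) := by ring
    rw [this]
    have h1 : 0 < B0 * ep * (1 - th) / dmp := by positivity
    exact mul_pos h1 hp
  have hKmpppos : 0 < Kmpp := by
    rw [hKmpp]
    have : B0 * emp * (1 - th) * tmp * bmp / dp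
        = (B0 * emp * (1 - th) / dp) * (tmp * bmp) := by ring
    rw [this]
    have h1 : 0 < B0 * emp * (1 - th) / dp := by positivity
    exact mul_pos h1 hmp
  set s : ℝ := Real.sqrt ((Rp - Rmp) ^ 2 + 4 * Kmpp * Kpmp) with hs_def
  have hs_nonneg : 0 ≤ s := Real.sqrt_nonneg _
  have hs2 : s ^ 2 = (Rp - Rmp) ^ 2 + 4 * Kmpp * Kpmp := by
    rw [hs_def, Real.sq_sqrt]; positivity
  have hs_gt : |Rp - Rmp| < s := by
    rw [hs_def, ← Real.sqrt_sq_eq_abs]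
    apply Real.sqrt_lt_sqrt (by positivity)
    nlinarith [mul_pos hKmpppos hKpmppos]
  have habs := abs_lt.mp hs_gt
  have hφ1 : 0 < Rp - Rmp + s := by linarith [habs.1]
  -- matrix in terms of Rp, Rmp, Kmpp, Kpmp
  have hM : DpInvGpLp dp dmp bp bmp tp tmp ep emp th
      = !![Rp / B0, Kmpp / B0; Kpmp / B0, Rmp / B0] := by
    unfold DpInvGpLp
    ext i j
    fin_cases i <;> fin_cases j <;>
      simp only [Matrix.of_apply, Fin.zero_eta, Fin.mk_one, Matrix.cons_val', Matrix.cons_val_zero, Matrix.cons_val_one, Matrix.head_cons,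
        Matrix.empty_val', Matrix.cons_val_fin_one, Matrix.head_fin_const] <;>
      (try rw [hRp]) <;> try rw [hRmp]
    · field_simp; ring
    · rw [hKmpp]; field_simp
    · rw [hKpmp]; field_simp
    · field_simp; ring
  set r' : ℝ := (1 / (2 * B0)) * (Rp + Rmp - s) with hr'_def
  have hrpos : 0 < r := by
    rw [hr]
    have : 0 < Rp + Rmp + s := by linarith
    positivity
  have h_tr : Rp / B0 + Rmp / B0 = r + r' := by
    rw [hr, hr'_def]; field_simp; ring
  have h_det : (Rp / B0) * (Rmp / B0) - (Kmpp / B0) * (Kpmp / B0) = r * r' := by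
    rw [hr, hr'_def]; field_simp; linear_combination hs2
  refine ⟨⟨hφ1, by linarith⟩, ?_, ?_, ?_⟩
  · rw [hM]; exact aux_eigvec B0 Rp Rmp Kpmp Kmpp s r hB0ne hs2 hr
  · rw [hM, aux_spec B0 Rp Rmp Kpmp Kmpp r r' h_tr h_det]; ring
  · intro z hz
    rw [hM, aux_spec B0 Rp Rmp Kpmp Kmpp r r' h_tr h_det] at hz
    have hsum : r + r' = (Rp + Rmp) / B0 := by rw [hr, hr'_def]; field_simp; ring
    have hdiff : r - r' = s / B0 := by rw [hr, hr'_def]; field_simp; ring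
    have h1 : 0 ≤ (Rp + Rmp) / B0 := by positivity
    have h2 : 0 ≤ s / B0 := by positivity
    have hr'le : |r'| ≤ r := abs_le.mpr ⟨by linarith, by linarith⟩
    rcases mul_eq_zero.mp hz with h | h
    · have hzz : z = (r : ℂ) := by linear_combination h
      rw [hzz, Complex.norm_real, Real.norm_eq_abs, abs_of_pos hrpos]
    · have hzz : z = (r' : ℂ) := by linear_combination h
      rw [hzz, Complex.norm_real, Real.norm_eq_abs]; exact hr'le
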